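/- If F is the unit ball of a reproducing kernel Hilbert space H with kernel k, then for a smooth positive density p and Stein operator A_q of density q, sup_{‖f‖_H ≤ 1} E_{x∼p}[A_q f(x)] = ‖ E_{x∼p}[A_q k(x, ·)] ‖_H, and consequently the squared supremum equals E_{x,x'∼p}[A_q A_q k(x, x')], where the second Stein operator acts on the second argument. -/
import Mathlib


open MeasureTheory

/-- If F is the unit ball of an RKHS H whose Steined feature map is Φ(x) = A_q k(x,·),
so that A_q f(x) = ⟪f, Φ(x)⟫_H (reproducing property pushed through the Stein operator)
and A_q A_q k(x,x') = ⟪Φ(x), Φ(x')⟫_H, then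
sup_{‖f‖≤1} E_{x∼p}[A_q f(x)] = ‖E_{x∼p}[Φ(x)]‖_H, and the squared supremum equals
E_{x,x'∼p}[A_q A_q k(x,x')]. -/
theorem ksd_sup_form {α : Type*} [MeasurableSpace α]
    {H : Type*} [NormedAddCommGroup H] [InnerProductSpace ℝ H] [CompleteSpace H]
    (p : Measure α) [IsProbabilityMeasure p]
    (Aq : H → α → ℝ) (Φ : α → H) (AqAqk : α → α → ℝ)
    (hrep : ∀ (f : H) (x : α), Aq f x = @inner ℝ _ _ f (Φ x))
    (hker : ∀ x x' : α, AqAqk x x' = @inner ℝ _ _ (Φ x) (Φ x'))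
    (hint : Integrable Φ p) :
    IsLUB {y : ℝ | ∃ f : H, ‖f‖ ≤ 1 ∧ y = ∫ x, Aq f x ∂p} ‖∫ x, Φ x ∂p‖ ∧
    ‖∫ x, Φ x ∂p‖ ^ 2 = ∫ x, ∫ x', AqAqk x x' ∂p ∂p := by
  set μ : H := ∫ x, Φ x ∂p with hμ
  have key : ∀ f : H, (∫ x, Aq f x ∂p) = @inner ℝ _ _ f μ := by
    intro f
    simp only [hrep]
    exact integral_inner hint f
  constructor
  · constructor
    · rintro y ⟨f, hf, rfl⟩
      rw [key]
      calc @inner ℝ _ _ f μ ≤ ‖f‖ * ‖μ‖ := real_inner_le_norm f μ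
        _ ≤ 1 * ‖μ‖ := by
            exact mul_le_mul_of_nonneg_right hf (norm_nonneg _)
        _ = ‖μ‖ := one_mul _
    · intro b hb
      by_cases h : μ = 0
      · have : (0 : ℝ) ∈ {y : ℝ | ∃ f : H, ‖f‖ ≤ 1 ∧ y = ∫ x, Aq f x ∂p} := by
          refine ⟨0, by simp, ?_⟩
          rw [key]; simp
        have := hb this
        simpa [h] using this
      · have hn : (0:ℝ) < ‖μ‖ := norm_pos_iff.mpr h
        have : ‖μ‖ ∈ {y : ℝ | ∃ f : H, ‖f‖ ≤ 1 ∧ y = ∫ x, Aq f x ∂p} := by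
          refine ⟨(‖μ‖)⁻¹ • μ, ?_, ?_⟩
          · rw [norm_smul]
            simp [abs_of_pos hn, inv_mul_cancel₀ hn.ne']
          · rw [key, real_inner_smul_left, real_inner_self_eq_norm_mul_norm]
            field_simp
        exact hb this
  · have h2 : ∀ x, (∫ x', AqAqk x x' ∂p) = @inner ℝ _ _ (Φ x) μ := by
      intro x
      simp only [hker]
      exact integral_inner hint (Φ x)
    calc ‖μ‖ ^ 2 = @inner ℝ _ _ μ μ := (real_inner_self_eq_norm_sq μ).symm
      _ = ∫ x, @inner ℝ _ _ (Φ x) μ ∂p := by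
          rw [← integral_inner hint μ]
          exact integral_congr_ae (Filter.Eventually.of_forall fun x =>
            real_inner_comm (Φ x) μ)
      _ = ∫ x, ∫ x', AqAqk x x' ∂p ∂p := by
          exact integral_congr_ae (Filter.Eventually.of_forall fun x => (h2 x).symm)
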